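/- Let k be a commutative ring and g a Lie algebra over k that decomposes as an internal direct sum g = g₊ ⊕ g₋ of two Lie subalgebras, with associated linear projections P₊ : g → g₊ and P₋ : g → g₋. Then the k-bilinear operation [a,b]' := [P₊a, P₊b] − [P₋a, P₋b] is a second Lie bracket on the underlying module of g: it is alternating and satisfies the Jacobi identity. (When 2 is invertible in k, [a,b]' equals [Ra,b] + [a,Rb] for the classical R-matrix R = ½(P₊ − P₋).) -/
import Mathlib


/-- Let `g` be a Lie algebra over a commutative ring `k` that decomposes as an internal
direct sum of two Lie subalgebras `gp ⊕ gm`, with associated linear projections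
`Pp`, `Pm` (so `Pp x + Pm x = x`, `Pp x ∈ gp`, `Pm x ∈ gm`, and `Pp`, `Pm` restrict to the
identity on `gp`, `gm` respectively).  Then the bilinear operation
`[a,b]' := [Pp a, Pp b] − [Pm a, Pm b]` is a second Lie bracket on the underlying module:
it is alternating and satisfies the Jacobi identity. -/
theorem second_lie_bracket_of_splitting {k L : Type*} [CommRing k] [LieRing L]
    [LieAlgebra k L] (gp gm : LieSubalgebra k L) (Pp Pm : L →ₗ[k] L)
    (hPp : ∀ x : L, Pp x ∈ gp) (hPm : ∀ x : L, Pm x ∈ gm)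
    (hsum : ∀ x : L, Pp x + Pm x = x)
    (hfp : ∀ x ∈ gp, Pp x = x) (hfm : ∀ x ∈ gm, Pm x = x) :
    (∀ a : L, ⁅Pp a, Pp a⁆ - ⁅Pm a, Pm a⁆ = (0 : L)) ∧
    (∀ a b c : L,
      (⁅Pp a, Pp (⁅Pp b, Pp c⁆ - ⁅Pm b, Pm c⁆)⁆ - ⁅Pm a, Pm (⁅Pp b, Pp c⁆ - ⁅Pm b, Pm c⁆)⁆) +
      (⁅Pp b, Pp (⁅Pp c, Pp a⁆ - ⁅Pm c, Pm a⁆)⁆ - ⁅Pm b, Pm (⁅Pp c, Pp a⁆ - ⁅Pm c, Pm a⁆)⁆) +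
      (⁅Pp c, Pp (⁅Pp a, Pp b⁆ - ⁅Pm a, Pm b⁆)⁆ - ⁅Pm c, Pm (⁅Pp a, Pp b⁆ - ⁅Pm a, Pm b⁆)⁆)
        = 0) := by
  -- `Pm` annihilates `gp`, and `Pp` annihilates `gm`.
  have hkm : ∀ x ∈ gp, Pm x = 0 := by
    intro x hx
    have h := hsum x
    rw [hfp x hx] at h
    exact add_eq_left.mp h
  have hkp : ∀ x ∈ gm, Pp x = 0 := by
    intro x hx
    have h := hsum x
    rw [hfm x hx] at h
    exact add_eq_right.mp h
  -- membership of brackets in the subalgebras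
  have memp : ∀ b c : L, ⁅Pp b, Pp c⁆ ∈ gp := fun b c => gp.lie_mem (hPp b) (hPp c)
  have memm : ∀ b c : L, ⁅Pm b, Pm c⁆ ∈ gm := fun b c => gm.lie_mem (hPm b) (hPm c)
  -- the projections of the new bracket
  have projp : ∀ b c : L, Pp (⁅Pp b, Pp c⁆ - ⁅Pm b, Pm c⁆) = ⁅Pp b, Pp c⁆ := by
    intro b c
    rw [map_sub, hfp _ (memp b c), hkp _ (memm b c), sub_zero]
  have projm : ∀ b c : L, Pm (⁅Pp b, Pp c⁆ - ⁅Pm b, Pm c⁆) = -⁅Pm b, Pm c⁆ := by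
    intro b c
    rw [map_sub, hkm _ (memp b c), hfm _ (memm b c), zero_sub]
  constructor
  · intro a
    simp
  · intro a b c
    simp only [projp, projm, lie_neg, sub_neg_eq_add]
    have J1 := lie_jacobi (Pp a) (Pp b) (Pp c)
    have J2 := lie_jacobi (Pm a) (Pm b) (Pm c)
    linear_combination (norm := abel) J1 + J2
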